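/- Let f : X → 𝒢(Z,C) be a function and x₀ ∈ dom f. The following are equivalent: (a) f(x₀) is minimal in f[X], i.e. for all x ∈ X, f(x) ⊇ f(x₀) implies f(x) = f(x₀); (b) for all x ∈ X with f(x) ≠ f(x₀) there exists z* ∈ C⁻∖{0} with φ_{f,z*}(x₀) < φ_{f,z*}(x); (c) for all x with f(x) ≠ f(x₀) there exists z* ∈ C⁻∖{0} with φ_{f,z*}(x) ≠ −∞ and φ_{f,z*}(x₀) ⊖ φ_{f,z*}(x) < 0; (d) for all x with f(x) ≠ f(x₀) there exists z* ∈ C⁻∖{0} with 0 < φ_{f,z*}(x) ⊖ φ_{f,z*}(x₀); (e) for all x with f(x) ≠ f(x₀): 0 ∉ f(x) ⊖ f(x₀). -/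

import Mathlib

open Set Pointwise

noncomputable section

variable {Z : Type*} [AddCommGroup Z] [Module ℝ Z] [TopologicalSpace Z]

/-- The inf-residual `A ⊖ B = {z : B + {z} ⊆ A}`. -/
def resid (A B : Set Z) : Set Z := {z : Z | B + {z} ⊆ A}

/-- The recession cone `0⁺A`, with the convention `0⁺∅ = ∅`. -/
def recCone (A : Set Z) : Set Z := {z : Z | A.Nonempty ∧ A + {z} ⊆ A}

/-- `A ⊕ B = cl (A + B)`. -/
def oplus (A B : Set Z) : Set Z := closure (A + B)

/-- Membership in `𝒢(Z,C)`: `A = cl co (A + C)`. -/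
def IsG (C A : Set Z) : Prop := A = closure (convexHull ℝ (A + C))

/-- The set `C⁻ \ {0}` of nonzero elements of the negative dual cone. -/
def negDualNZ (C : Set Z) : Set (Z →L[ℝ] ℝ) :=
  {p : Z →L[ℝ] ℝ | (∀ c ∈ C, p c ≤ 0) ∧ p ≠ 0}

/-- `inf {-z*(z) : z ∈ A}` as an extended real. -/
def scal (p : Z →L[ℝ] ℝ) (A : Set Z) : EReal :=
  sInf ((fun z => ((-(p z) : ℝ) : EReal)) '' A)

/-- Support function `σ(z*|A) = sup {z*(z) : z ∈ A}` as an extended real. -/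
def suppF (p : Z →L[ℝ] ℝ) (A : Set Z) : EReal :=
  sSup ((fun z => ((p z : ℝ) : EReal)) '' A)

/-- Inf-residuation on the extended reals: `r ⊖ s = inf {t ∈ ℝ : r ≤ s + t}`. -/
def eresid (r s : EReal) : EReal :=
  sInf ((fun t : ℝ => (t : EReal)) '' {t : ℝ | r ≤ s + (t : EReal)})

variable {X : Type*} [AddCommGroup X] [Module ℝ X]

/-- The scalarization `φ_{f,z*}(x) = inf {-z*(z) : z ∈ f(x)}`. -/
def phi (f : X → Set Z) (p : Z →L[ℝ] ℝ) (x : X) : EReal := scal p (f x)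

/-- Convexity for set-valued functions:
`f(t x₁ + (1-t) x₂) ⊇ cl (t f(x₁) + (1-t) f(x₂))`. -/
def ConvexSV (f : X → Set Z) : Prop :=
  ∀ x₁ x₂ : X, ∀ t : ℝ, t ∈ Ioo (0:ℝ) 1 →
    closure (t • f x₁ + (1 - t) • f x₂) ⊆ f (t • x₁ + (1 - t) • x₂)

/-- The set-valued directional derivative
`f′(x,u) = ⋂_{t₀>0} cl co ⋃_{0<t<t₀} (1/t)•(f(x+tu) ⊖ f(x))`. -/
def sder (f : X → Set Z) (x u : X) : Set Z :=
  ⋂ t₀ ∈ Ioi (0:ℝ), closure (convexHull ℝ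
    (⋃ t ∈ Ioo (0:ℝ) t₀, (1 / t) • resid (f (x + t • u)) (f x)))

/-- The scalar Dini derivative `φ′_{f,z*}(x,u) = inf_{t>0} (1/t)(φ(x+tu) ⊖ φ(x))`. -/
def phiDer (f : X → Set Z) (p : Z →L[ℝ] ℝ) (x u : X) : EReal :=
  ⨅ t ∈ Ioi (0:ℝ), (((1 / t : ℝ)) : EReal) * eresid (phi f p (x + t • u)) (phi f p x)

end




lemma eresid_pos_iff_aux {r s : EReal} (hs : s ≠ ⊤) : 0 < eresid r s ↔ s < r := by
  constructor
  · intro h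
    by_contra hle
    push_neg at hle
    have h0 : (0:ℝ) ∈ {t : ℝ | r ≤ s + (t : EReal)} := by
      simp only [mem_setOf_eq, EReal.coe_zero, add_zero]; exact hle
    have := sInf_le (mem_image_of_mem (fun t : ℝ => (t : EReal)) h0)
    simp only [EReal.coe_zero] at this
    exact absurd h (not_lt.2 this)
  · intro h
    induction s using EReal.rec with
    | top => exact absurd rfl hs
    | bot =>
      have he : {t : ℝ | r ≤ (⊥:EReal) + (t : EReal)} = ∅ := by
        ext t; simp [EReal.bot_add, le_bot_iff, h.ne']
      rw [eresid, he]; simp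
    | coe s =>
      induction r using EReal.rec with
      | bot => exact absurd h (by simp)
      | top =>
        have he : {t : ℝ | (⊤:EReal) ≤ (s:EReal) + (t : EReal)} = ∅ := by
          ext t
          simp only [mem_setOf_eq, top_le_iff, mem_empty_iff_false, iff_false]
          rw [← EReal.coe_add]
          exact EReal.coe_ne_top _
        rw [eresid, he]; simp
      | coe r =>
        have hrs : s < r := by exact_mod_cast h
        have h1 : (0:EReal) < ((r - s : ℝ) : EReal) := by exact_mod_cast sub_pos.2 hrs
        refine lt_of_lt_of_le h1 (le_sInf ?_)
        rintro x ⟨t, ht, rfl⟩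
        simp only [mem_setOf_eq, ← EReal.coe_add, EReal.coe_le_coe_iff] at ht
        exact EReal.coe_le_coe_iff.2 (by linarith)

lemma eresid_neg_iff_aux {r s : EReal} (hr : r ≠ ⊤) :
    (s ≠ ⊥ ∧ eresid r s < 0) ↔ r < s := by
  constructor
  · rintro ⟨hsb, hlt⟩
    by_contra hle
    push_neg at hle
    induction s using EReal.rec with
    | bot => exact hsb rfl
    | top => exact hr (top_le_iff.1 hle)
    | coe s =>
      induction r using EReal.rec with
      | top => exact hr rfl
      | bot => exact absurd hle (by simp)
      | coe r =>
        have hsr : s ≤ r := by exact_mod_cast hle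
        have h0 : (0:EReal) ≤ eresid r s := by
          refine le_sInf ?_
          rintro x ⟨t, ht, rfl⟩
          simp only [mem_setOf_eq, ← EReal.coe_add, EReal.coe_le_coe_iff] at ht
          exact EReal.coe_nonneg.2 (by linarith)
        exact absurd hlt (not_lt.2 h0)
  · intro h
    refine ⟨(bot_le.trans_lt h).ne', ?_⟩
    induction s using EReal.rec with
    | bot => exact absurd h (by simp)
    | top =>
      have hm : (-1:ℝ) ∈ {t : ℝ | r ≤ (⊤:EReal) + (t : EReal)} := by
        simp [EReal.top_add_coe, le_top]
      have := sInf_le (mem_image_of_mem (fun t : ℝ => (t : EReal)) hm)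
      refine lt_of_le_of_lt this ?_
      exact EReal.coe_neg'.2 (by norm_num)
    | coe s =>
      induction r using EReal.rec with
      | top => exact absurd rfl hr
      | bot =>
        have hm : (-1:ℝ) ∈ {t : ℝ | (⊥:EReal) ≤ (s:EReal) + (t : EReal)} := by
          simp
        have := sInf_le (mem_image_of_mem (fun t : ℝ => (t : EReal)) hm)
        refine lt_of_le_of_lt this ?_
        exact EReal.coe_neg'.2 (by norm_num)
      | coe r =>
        have hrs : r < s := by exact_mod_cast h
        have hm : ((r - s)/2 : ℝ) ∈ {t : ℝ | (r:EReal) ≤ (s:EReal) + (t : EReal)} := by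
          simp only [mem_setOf_eq, ← EReal.coe_add, EReal.coe_le_coe_iff]
          linarith
        have := sInf_le (mem_image_of_mem (fun t : ℝ => (t : EReal)) hm)
        refine lt_of_le_of_lt this ?_
        exact EReal.coe_neg'.2 (by linarith)

theorem stmt_6
  {Z : Type*} [AddCommGroup Z] [Module ℝ Z] [TopologicalSpace Z]
  [IsTopologicalAddGroup Z] [ContinuousSMul ℝ Z] [LocallyConvexSpace ℝ Z] [T2Space Z]
  {X : Type*} [AddCommGroup X] [Module ℝ X]
  (C : Set Z) (hCclosed : IsClosed C) (hCconv : Convex ℝ C)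
  (hCcone : ∀ c ∈ C, ∀ r : ℝ, 0 < r → r • c ∈ C) (hC0 : (0:Z) ∈ C)
  (hdual : (negDualNZ C).Nonempty)
  (f : X → Set Z) (hG : ∀ x, IsG C (f x)) (x₀ : X) (hx₀ : (f x₀).Nonempty) :
    ((∀ x : X, f x₀ ⊆ f x → f x = f x₀) ↔
      (∀ x : X, f x ≠ f x₀ → ∃ p ∈ negDualNZ C, phi f p x₀ < phi f p x))
    ∧ ((∀ x : X, f x₀ ⊆ f x → f x = f x₀) ↔
      (∀ x : X, f x ≠ f x₀ → ∃ p ∈ negDualNZ C,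
        phi f p x ≠ ⊥ ∧ eresid (phi f p x₀) (phi f p x) < 0))
    ∧ ((∀ x : X, f x₀ ⊆ f x → f x = f x₀) ↔
      (∀ x : X, f x ≠ f x₀ → ∃ p ∈ negDualNZ C,
        (0:EReal) < eresid (phi f p x) (phi f p x₀)))
    ∧ ((∀ x : X, f x₀ ⊆ f x → f x = f x₀) ↔
      (∀ x : X, f x ≠ f x₀ → (0:Z) ∉ resid (f x) (f x₀))) := by
  have hne_top : ∀ p : Z →L[ℝ] ℝ, phi f p x₀ ≠ ⊤ := by
    intro p
    obtain ⟨z, hz⟩ := hx₀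
    have h1 : phi f p x₀ ≤ ((-(p z) : ℝ) : EReal) :=
      sInf_le (mem_image_of_mem _ hz)
    exact ne_top_of_le_ne_top (EReal.coe_ne_top _) h1
  have hmono : ∀ (p : Z →L[ℝ] ℝ) (x : X), f x₀ ⊆ f x → phi f p x ≤ phi f p x₀ :=
    fun p x h => sInf_le_sInf (image_mono h)
  have hab : (∀ x : X, f x₀ ⊆ f x → f x = f x₀) ↔
      (∀ x : X, f x ≠ f x₀ → ∃ p ∈ negDualNZ C, phi f p x₀ < phi f p x) := by
    constructor
    · intro ha x hx
      by_cases hfx : (f x).Nonempty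
      · have hns : ¬ f x₀ ⊆ f x := fun hsub => hx (ha x hsub)
        obtain ⟨z, hz, hzn⟩ := not_subset.1 hns
        have hclosed : IsClosed (f x) := by rw [hG x]; exact isClosed_closure
        have hconv : Convex ℝ (f x) := by rw [hG x]; exact (convex_convexHull ℝ _).closure
        obtain ⟨p, u, hpu, huz⟩ := geometric_hahn_banach_closed_point hconv hclosed hzn
        obtain ⟨y, hy⟩ := hfx
        have hsubC : f x + C ⊆ f x := by
          intro w hw
          rw [hG x]
          exact subset_closure (subset_convexHull ℝ _ hw)
        refine ⟨p, ⟨?_, ?_⟩, ?_⟩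
        · intro c hc
          by_contra hpc
          push_neg at hpc
          have hypu := hpu y hy
          set t : ℝ := (u - p y + 1) / (p c) with ht
          have htpos : 0 < t := div_pos (by linarith) hpc
          have hmem : y + t • c ∈ f x := hsubC (add_mem_add hy (hCcone c hc t htpos))
          have hlt := hpu _ hmem
          rw [map_add, map_smul, smul_eq_mul, ht, div_mul_cancel₀ _ (ne_of_gt hpc)] at hlt
          linarith
        · intro hp0
          have h1 := hpu y hy
          rw [hp0] at h1 huz
          simp only [ContinuousLinearMap.zero_apply] at h1 huz
          linarith
        · have h1 : phi f p x₀ ≤ ((-(p z) : ℝ) : EReal) :=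
            sInf_le (mem_image_of_mem _ hz)
          have h2 : ((-u : ℝ) : EReal) ≤ phi f p x := by
            refine le_sInf ?_
            rintro w ⟨a, ha', rfl⟩
            exact EReal.coe_le_coe_iff.2 (by linarith [hpu a ha'])
          have h3 : ((-(p z) : ℝ) : EReal) < ((-u : ℝ) : EReal) :=
            EReal.coe_lt_coe_iff.2 (by linarith)
          exact lt_of_le_of_lt h1 (lt_of_lt_of_le h3 h2)
      · obtain ⟨p, hp⟩ := hdual
        refine ⟨p, hp, ?_⟩
        have hfe : f x = ∅ := not_nonempty_iff_eq_empty.1 hfx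
        have hxt : phi f p x = ⊤ := by
          simp only [phi, scal, hfe, image_empty, sInf_empty]
        rw [hxt]
        exact lt_top_iff_ne_top.2 (hne_top p)
    · intro hb x hsub
      by_contra hne
      obtain ⟨p, _, hlt⟩ := hb x hne
      exact absurd hlt (not_lt.2 (hmono p x hsub))
  refine ⟨hab, ?_, ?_, ?_⟩
  · rw [hab]
    constructor
    · intro h x hx
      obtain ⟨p, hp, hlt⟩ := h x hx
      exact ⟨p, hp, (eresid_neg_iff_aux (hne_top p)).2 hlt⟩
    · intro h x hx
      obtain ⟨p, hp, hc⟩ := h x hx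
      exact ⟨p, hp, (eresid_neg_iff_aux (hne_top p)).1 hc⟩
  · rw [hab]
    constructor
    · intro h x hx
      obtain ⟨p, hp, hlt⟩ := h x hx
      exact ⟨p, hp, (eresid_pos_iff_aux (hne_top p)).2 hlt⟩
    · intro h x hx
      obtain ⟨p, hp, hc⟩ := h x hx
      exact ⟨p, hp, (eresid_pos_iff_aux (hne_top p)).1 hc⟩
  · have h0 : ∀ x : X, (0:Z) ∈ resid (f x) (f x₀) ↔ f x₀ ⊆ f x := by
      intro x
      have : f x₀ + ({0} : Set Z) = f x₀ := by
        rw [Set.add_singleton]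
        simp
      simp only [resid, mem_setOf_eq, this]
    constructor
    · intro ha x hx h0x
      exact hx (ha x ((h0 x).1 h0x))
    · intro he x hsub
      by_contra hne
      exact he x hne ((h0 x).2 hsub)
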